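/- Let G be a median graph with n vertices and m edges whose largest induced hypercube subgraph has dimension d. Then m ≤ d·n. -/

import Mathlib

def interval {V : Type*} (G : SimpleGraph V) (u v : V) : Set V :=
  {x | G.dist u x + G.dist x v = G.dist u v}

def IsMedianGraph {V : Type*} (G : SimpleGraph V) : Prop :=
  G.Connected ∧ ∀ x y z : V,
    ∃! m : V, m ∈ interval G x y ∧ m ∈ interval G y z ∧ m ∈ interval G z x

def cubeGraph (k : ℕ) : SimpleGraph (Fin k → Bool) :=
  SimpleGraph.fromRel (fun x y => ∃ i, x i ≠ y i ∧ ∀ j, j ≠ i → x j = y j)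

namespace MedianProof

open SimpleGraph Finset

variable {V : Type*} {G : SimpleGraph V}

lemma dzero (hG : IsMedianGraph G) {a b : V} (h : G.dist a b = 0) : a = b :=
  (hG.1.dist_eq_zero_iff).mp h

lemma adj_dist {a b : V} (h : G.Adj a b) : G.dist a b = 1 :=
  SimpleGraph.dist_eq_one_iff_adj.mpr h

noncomputable def med (hG : IsMedianGraph G) (a b c : V) : V :=
  (hG.2 a b c).exists.choose

lemma med_spec (hG : IsMedianGraph G) (a b c : V) :
    G.dist a (med hG a b c) + G.dist (med hG a b c) b = G.dist a b ∧
    G.dist b (med hG a b c) + G.dist (med hG a b c) c = G.dist b c ∧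
    G.dist c (med hG a b c) + G.dist (med hG a b c) a = G.dist c a :=
  (hG.2 a b c).exists.choose_spec

lemma med_uniq (hG : IsMedianGraph G) {a b c m m' : V}
    (h1 : G.dist a m + G.dist m b = G.dist a b)
    (h2 : G.dist b m + G.dist m c = G.dist b c)
    (h3 : G.dist c m + G.dist m a = G.dist c a)
    (h1' : G.dist a m' + G.dist m' b = G.dist a b)
    (h2' : G.dist b m' + G.dist m' c = G.dist b c)
    (h3' : G.dist c m' + G.dist m' a = G.dist c a) : m = m' := by
  obtain ⟨m₀, _, hu⟩ := hG.2 a b c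
  have e1 : m = m₀ := hu m ⟨h1, h2, h3⟩
  have e2 : m' = m₀ := hu m' ⟨h1', h2', h3'⟩
  rw [e1, e2]

/-- every edge changes the distance to any vertex by exactly one -/
lemma horiz (hG : IsMedianGraph G) {a b : V} (hab : G.Adj a b) (z : V) :
    G.dist z a + 1 = G.dist z b ∨ G.dist z b + 1 = G.dist z a := by
  obtain ⟨s1, s2, s3⟩ := med_spec hG z a b
  have hd : G.dist a b = 1 := adj_dist hab
  rw [hd] at s2
  have : G.dist a (med hG z a b) = 0 ∨ G.dist (med hG z a b) b = 0 := by omega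
  rcases this with h | h
  · have : med hG z a b = a := (dzero hG h).symm
    rw [this] at s3
    have cab : G.dist b a = 1 := by rw [G.dist_comm]; exact hd
    have cz : G.dist a z = G.dist z a := G.dist_comm ..
    have cz2 : G.dist b z = G.dist z b := G.dist_comm ..
    omega
  · have : med hG z a b = b := dzero hG h
    rw [this] at s1
    have cz : G.dist b a = 1 := by rw [G.dist_comm]; exact hd
    omega

lemma exists_adj_toward (hG : IsMedianGraph G) {a b : V} (h : a ≠ b) :
    ∃ z, G.Adj a z ∧ G.dist z b + 1 = G.dist a b := by
  obtain ⟨p, hp⟩ := hG.1.exists_walk_length_eq_dist a b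
  cases p with
  | nil => exact absurd rfl h
  | @cons _ z _ hadj q =>
    refine ⟨z, hadj, ?_⟩
    simp only [SimpleGraph.Walk.length_cons] at hp
    have h1 : G.dist z b ≤ q.length := SimpleGraph.dist_le q
    have h2 : G.dist a b ≤ G.dist a z + G.dist z b := hG.1.dist_triangle
    have h3 : G.dist a z = 1 := adj_dist hadj
    omega

lemma parity (hG : IsMedianGraph G) (z : V) :
    ∀ n a b, G.dist a b = n → (G.dist z a + G.dist z b + G.dist a b) % 2 = 0 := by
  intro n
  induction n with
  | zero =>
    intro a b hab
    have : a = b := dzero hG hab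
    subst this
    omega
  | succ n ih =>
    intro a b hab
    have hne : a ≠ b := by
      intro he; subst he; rw [G.dist_self] at hab; omega
    obtain ⟨w, hw, hwd⟩ := exists_adj_toward hG hne
    have h1 := ih w b (by omega)
    have h2 := horiz hG hw z
    omega

lemma dist_two (hG : IsMedianGraph G) {v w₁ w₂ : V} (h1 : G.Adj v w₁) (h2 : G.Adj v w₂)
    (hne : w₁ ≠ w₂) : G.dist w₁ w₂ = 2 := by
  have t : G.dist w₁ w₂ ≤ G.dist w₁ v + G.dist v w₂ := hG.1.dist_triangle
  have e1 : G.dist w₁ v = 1 := adj_dist h1.symm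
  have e2 : G.dist v w₂ = 1 := adj_dist h2
  have hne0 : G.dist w₁ w₂ ≠ 0 := fun h => hne (dzero hG h)
  have hne1 : G.dist w₁ w₂ ≠ 1 := by
    intro h
    have hadj : G.Adj w₁ w₂ := SimpleGraph.dist_eq_one_iff_adj.mp h
    have := horiz hG hadj v
    have e3 : G.dist v w₁ = 1 := adj_dist h1
    omega
  omega
lemma claimK_aligned (hG : IsMedianGraph G) {v a b w₁ w₂ : V} (hab : G.Adj a b)
    (h1 : G.Adj v w₁) (h2 : G.Adj v w₂) (hne : w₁ ≠ w₂)
    (e1 : G.dist a w₁ + 1 = G.dist a v) (e2 : G.dist a w₂ + 1 = G.dist a v)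
    (e3 : G.dist b v + 1 = G.dist b w₁) (e4 : G.dist b v + 1 = G.dist b w₂) : False := by
  have hd12 : G.dist w₁ w₂ = 2 := dist_two hG h1 h2 hne
  have hdab : G.dist a b = 1 := adj_dist hab
  have hdba : G.dist b a = 1 := by rw [G.dist_comm]; exact hdab
  have horv := horiz hG hab v
  -- triangle : dist b w₁ ≤ dist b a + dist a w₁
  have t1 : G.dist b w₁ ≤ G.dist b a + G.dist a w₁ := hG.1.dist_triangle
  rcases horv with hv | hv
  · -- dist v a + 1 = dist v b : contradiction by triangle
    have ca : G.dist v a = G.dist a v := G.dist_comm ..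
    have cb : G.dist v b = G.dist b v := G.dist_comm ..
    omega
  · -- main case : dist v b + 1 = dist v a
    have ca : G.dist v a = G.dist a v := G.dist_comm ..
    have cb : G.dist v b = G.dist b v := G.dist_comm ..
    obtain ⟨s1, s2, s3⟩ := med_spec hG a w₁ w₂
    set m := med hG a w₁ w₂ with hm
    rw [hd12] at s2
    have c1 : G.dist w₂ m = G.dist m w₂ := G.dist_comm ..
    have c2 : G.dist w₂ a = G.dist a w₂ := G.dist_comm ..
    have c3 : G.dist w₁ m = G.dist m w₁ := G.dist_comm ..
    have c4 : G.dist m a = G.dist a m := G.dist_comm ..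
    have hmw₁ : G.dist m w₁ = 1 := by omega
    have hmw₂ : G.dist m w₂ = 1 := by omega
    have ham : G.dist a m + 2 = G.dist a v := by omega
    -- dist b m = dist b v
    have t2 : G.dist b m ≤ G.dist b a + G.dist a m := hG.1.dist_triangle
    have t3 : G.dist b w₁ ≤ G.dist b m + G.dist m w₁ := hG.1.dist_triangle
    have hbm : G.dist b m = G.dist b v := by omega
    -- both v and m are medians of (b, w₁, w₂)
    have dv1 : G.dist v w₁ = 1 := adj_dist h1
    have dv2 : G.dist v w₂ = 1 := adj_dist h2
    have dw1v : G.dist w₁ v = 1 := adj_dist h1.symm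
    have dw2v : G.dist w₂ v = 1 := adj_dist h2.symm
    have dw2b : G.dist w₂ b = G.dist b w₂ := G.dist_comm ..
    have dw1m : G.dist w₁ m = 1 := c3.trans hmw₁
    have dw2m : G.dist w₂ m = 1 := c1.trans hmw₂
    have dmb : G.dist m b = G.dist b m := G.dist_comm ..
    have dmv : G.dist m v = G.dist v m := G.dist_comm ..
    have hvm : v = m := by
      apply med_uniq hG (a := b) (b := w₁) (c := w₂)
      · omega
      · omega
      · omega
      · omega
      · omega
      · omega
    -- contradiction : dist a v = dist a m = dist a v - 2
    rw [← hvm] at ham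
    omega

lemma claimK (hG : IsMedianGraph G) {v a b w₁ w₂ : V} (hab : G.Adj a b)
    (h1 : G.Adj v w₁) (h2 : G.Adj v w₂) (hne : w₁ ≠ w₂)
    (f1 : (G.dist a w₁ < G.dist a v ∧ ¬ G.dist b w₁ < G.dist b v) ∨
          (¬ G.dist a w₁ < G.dist a v ∧ G.dist b w₁ < G.dist b v))
    (f2 : (G.dist a w₂ < G.dist a v ∧ ¬ G.dist b w₂ < G.dist b v) ∨
          (¬ G.dist a w₂ < G.dist a v ∧ G.dist b w₂ < G.dist b v)) : False := by
  have ha1 := horiz hG h1 a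
  have ha2 := horiz hG h2 a
  have hb1 := horiz hG h1 b
  have hb2 := horiz hG h2 b
  have ca1 : G.dist a v + 1 = G.dist a w₁ ∨ G.dist a w₁ + 1 = G.dist a v := ha1
  -- convert flips to equations
  have g1 : (G.dist a w₁ + 1 = G.dist a v ∧ G.dist b v + 1 = G.dist b w₁) ∨
            (G.dist a v + 1 = G.dist a w₁ ∧ G.dist b w₁ + 1 = G.dist b v) := by
    rcases f1 with ⟨p, q⟩ | ⟨p, q⟩
    · left; constructor
      · rcases ha1 with h | h <;> omega
      · rcases hb1 with h | h <;> omega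
    · right; constructor
      · rcases ha1 with h | h <;> omega
      · rcases hb1 with h | h <;> omega
  have g2 : (G.dist a w₂ + 1 = G.dist a v ∧ G.dist b v + 1 = G.dist b w₂) ∨
            (G.dist a v + 1 = G.dist a w₂ ∧ G.dist b w₂ + 1 = G.dist b v) := by
    rcases f2 with ⟨p, q⟩ | ⟨p, q⟩
    · left; constructor
      · rcases ha2 with h | h <;> omega
      · rcases hb2 with h | h <;> omega
    · right; constructor
      · rcases ha2 with h | h <;> omega
      · rcases hb2 with h | h <;> omega
  have hdab : G.dist a b = 1 := adj_dist hab
  have hdba : G.dist b a = 1 := by rw [G.dist_comm]; exact hdab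
  rcases g1 with ⟨p1, q1⟩ | ⟨p1, q1⟩ <;> rcases g2 with ⟨p2, q2⟩ | ⟨p2, q2⟩
  · exact claimK_aligned hG hab h1 h2 hne p1 p2 q1 q2
  · -- mixed : a low w₁, b low w₂
    have t1 : G.dist a w₂ ≤ G.dist a b + G.dist b w₂ := hG.1.dist_triangle
    have t2 : G.dist b w₁ ≤ G.dist b a + G.dist a w₁ := hG.1.dist_triangle
    omega
  · -- mixed symmetric
    have t1 : G.dist a w₁ ≤ G.dist a b + G.dist b w₁ := hG.1.dist_triangle
    have t2 : G.dist b w₂ ≤ G.dist b a + G.dist a w₂ := hG.1.dist_triangle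
    omega
  · exact claimK_aligned hG hab.symm h1 h2 hne q1 q2 p1 p2
variable [DecidableEq V]

/-- the set of "downward directions" at `v` (within `D`) on which `a` and `b` disagree -/
noncomputable def flips (G : SimpleGraph V) (v : V) (D : Finset V) (a b : V) : Finset V :=
  D.filter (fun w => (G.dist a w < G.dist a v ∧ ¬ G.dist b w < G.dist b v) ∨
    (¬ G.dist a w < G.dist a v ∧ G.dist b w < G.dist b v))

lemma flips_card_adj (hG : IsMedianGraph G) {v : V} {D : Finset V}
    (hDadj : ∀ w ∈ D, G.Adj v w) {a b : V} (hab : G.Adj a b) :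
    (flips G v D a b).card ≤ 1 := by
  apply Finset.card_le_one.mpr
  intro x hx y hy
  by_contra hxy
  simp only [flips, Finset.mem_filter] at hx hy
  exact claimK hG hab (hDadj x hx.1) (hDadj y hy.1) (Ne.symm (Ne.intro hxy) |>.symm) hx.2 hy.2

lemma flips_subset_union (G : SimpleGraph V) (v : V) (D : Finset V) (a z b : V) :
    flips G v D a b ⊆ flips G v D a z ∪ flips G v D z b := by
  intro w hw
  simp only [flips, Finset.mem_filter, Finset.mem_union] at hw ⊢
  tauto

lemma pot (hG : IsMedianGraph G) {v : V} {D : Finset V}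
    (hDadj : ∀ w ∈ D, G.Adj v w) :
    ∀ n a b, G.dist a b = n → (flips G v D a b).card ≤ n := by
  intro n
  induction n with
  | zero =>
    intro a b hab
    have : a = b := dzero hG hab
    subst this
    have : flips G v D a a = ∅ := by
      apply Finset.eq_empty_of_forall_notMem
      intro w hw
      simp only [flips, Finset.mem_filter] at hw
      tauto
    simp [this]
  | succ n ih =>
    intro a b hab
    have hne : a ≠ b := by
      intro he; subst he; rw [G.dist_self] at hab; omega
    obtain ⟨z, hz, hzd⟩ := exists_adj_toward hG hne
    calc (flips G v D a b).card ≤ (flips G v D a z ∪ flips G v D z b).card :=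
        Finset.card_le_card (flips_subset_union G v D a z b)
      _ ≤ (flips G v D a z).card + (flips G v D z b).card := Finset.card_union_le _ _
      _ ≤ 1 + n := by
        have h1 := flips_card_adj hG hDadj hz
        have h2 := ih z b (by omega)
        omega
      _ = n + 1 := by omega
/-- An partial cube family below `v` indexed by subsets of `W`. -/
structure CubeFam (G : SimpleGraph V) (u v : V) (D W : Finset V) (x : Finset V → V) : Prop where
  base : x ∅ = v
  depth : ∀ S, S ⊆ W → G.dist u (x S) + S.card = G.dist u v
  step : ∀ S e, S ⊆ W → e ∈ W → e ∉ S → G.dist (x S) (x (insert e S)) = 1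
  sign : ∀ S w, S ⊆ W → w ∈ D →
    (w ∈ S → G.dist (x S) w + 1 = G.dist (x S) v) ∧
    (w ∉ S → G.dist (x S) w = G.dist (x S) v + 1)

variable {u v : V} {D W : Finset V} {x : Finset V → V}

lemma fam_chain (hG : IsMedianGraph G) (hf : CubeFam G u v D W x) :
    ∀ n S T, S ⊆ W → T ⊆ W → (S \ T).card + (T \ S).card = n →
      G.dist (x S) (x T) ≤ n := by
  intro n
  induction n with
  | zero =>
    intro S T hS hT hc
    have h1 : S \ T = ∅ := Finset.card_eq_zero.mp (by omega)
    have h2 : T \ S = ∅ := Finset.card_eq_zero.mp (by omega)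
    have : S = T := Finset.Subset.antisymm
      (Finset.sdiff_eq_empty_iff_subset.mp h1) (Finset.sdiff_eq_empty_iff_subset.mp h2)
    subst this
    simp [G.dist_self]
  | succ n ih =>
    intro S T hS hT hc
    by_cases hTS : (T \ S).Nonempty
    · obtain ⟨e, he⟩ := hTS
      rw [Finset.mem_sdiff] at he
      set T' := T.erase e with hT'
      have heq : insert e T' = T := Finset.insert_erase he.1
      have hstep : G.dist (x T') (x T) = 1 := by
        have := hf.step T' e (Finset.Subset.trans (Finset.erase_subset _ _) hT)
          (hT he.1) (Finset.notMem_erase _ _)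
        rwa [heq] at this
      have hsd1 : S \ T' = S \ T := by
        ext a
        simp only [Finset.mem_sdiff, hT', Finset.mem_erase]
        constructor
        · rintro ⟨ha, hb⟩; exact ⟨ha, fun h => hb ⟨fun hae => he.2 (hae ▸ ha), h⟩⟩
        · rintro ⟨ha, hb⟩; exact ⟨ha, fun h => hb h.2⟩
      have hsd2 : T' \ S = (T \ S).erase e := by
        ext a
        simp only [Finset.mem_sdiff, hT', Finset.mem_erase]
        tauto
      have hcard : (S \ T').card + (T' \ S).card = n := by
        have hpos : 0 < (T \ S).card := Finset.card_pos.mpr ⟨e, Finset.mem_sdiff.mpr he⟩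
        rw [hsd1, hsd2, Finset.card_erase_of_mem (Finset.mem_sdiff.mpr he)]
        omega
      have hih := ih S T' (by assumption) (Finset.Subset.trans (Finset.erase_subset _ _) hT) hcard
      have htri : G.dist (x S) (x T) ≤ G.dist (x S) (x T') + G.dist (x T') (x T) :=
        hG.1.dist_triangle
      omega
    · have hTSe : T \ S = ∅ := Finset.not_nonempty_iff_eq_empty.mp hTS
      have h0 : (T \ S).card = 0 := by rw [hTSe]; simp
      have hST : (S \ T).Nonempty := by
        rw [← Finset.card_pos]; omega
      obtain ⟨e, he⟩ := hST
      rw [Finset.mem_sdiff] at he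
      set S' := S.erase e with hS'
      have heq : insert e S' = S := Finset.insert_erase he.1
      have hstep : G.dist (x S) (x S') = 1 := by
        have := hf.step S' e (Finset.Subset.trans (Finset.erase_subset _ _) hS)
          (hS he.1) (Finset.notMem_erase _ _)
        rw [heq] at this
        rw [G.dist_comm]; exact this
      have hsd1 : T \ S' = T \ S := by
        ext a
        simp only [Finset.mem_sdiff, hS', Finset.mem_erase]
        constructor
        · rintro ⟨ha, hb⟩; exact ⟨ha, fun h => hb ⟨fun hae => he.2 (hae ▸ ha), h⟩⟩
        · rintro ⟨ha, hb⟩; exact ⟨ha, fun h => hb h.2⟩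
      have hsd2 : S' \ T = (S \ T).erase e := by
        ext a
        simp only [Finset.mem_sdiff, hS', Finset.mem_erase]
        tauto
      have hcard : (S' \ T).card + (T \ S').card = n := by
        have hpos : 0 < (S \ T).card := Finset.card_pos.mpr ⟨e, Finset.mem_sdiff.mpr he⟩
        rw [hsd1, hsd2, Finset.card_erase_of_mem (Finset.mem_sdiff.mpr he)]
        omega
      have hih := ih S' T (Finset.Subset.trans (Finset.erase_subset _ _) hS) hT hcard
      have htri : G.dist (x S) (x T) ≤ G.dist (x S) (x S') + G.dist (x S') (x T) :=
        hG.1.dist_triangle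
      omega

lemma fam_subset_flips (hf : CubeFam G u v D W x) (hWD : W ⊆ D)
    {S T : Finset V} (hS : S ⊆ W) (hT : T ⊆ W) :
    (S \ T) ∪ (T \ S) ⊆ flips G v D (x S) (x T) := by
  intro w hw
  rw [Finset.mem_union] at hw
  simp only [flips, Finset.mem_filter]
  rcases hw with hw | hw
  · rw [Finset.mem_sdiff] at hw
    refine ⟨hWD (hS hw.1), Or.inl ⟨?_, ?_⟩⟩
    · have := (hf.sign S w hS (hWD (hS hw.1))).1 hw.1; omega
    · have := (hf.sign T w hT (hWD (hS hw.1))).2 hw.2; omega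
  · rw [Finset.mem_sdiff] at hw
    refine ⟨hWD (hT hw.1), Or.inr ⟨?_, ?_⟩⟩
    · have := (hf.sign S w hS (hWD (hT hw.1))).2 hw.2; omega
    · have := (hf.sign T w hT (hWD (hT hw.1))).1 hw.1; omega

lemma fam_pairdist (hG : IsMedianGraph G) (hf : CubeFam G u v D W x) (hWD : W ⊆ D)
    (hDadj : ∀ w ∈ D, G.Adj v w) {S T : Finset V} (hS : S ⊆ W) (hT : T ⊆ W) :
    G.dist (x S) (x T) = (S \ T).card + (T \ S).card := by
  have hup := fam_chain hG hf _ S T hS hT rfl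
  have hlow : (S \ T).card + (T \ S).card ≤ G.dist (x S) (x T) := by
    have h1 : ((S \ T) ∪ (T \ S)).card ≤ (flips G v D (x S) (x T)).card :=
      Finset.card_le_card (fam_subset_flips hf hWD hS hT)
    have h2 : ((S \ T) ∪ (T \ S)).card = (S \ T).card + (T \ S).card :=
      Finset.card_union_of_disjoint disjoint_sdiff_sdiff
    have h3 := pot hG hDadj (G.dist (x S) (x T)) (x S) (x T) rfl
    omega
  omega

lemma fam_level (hG : IsMedianGraph G) (hf : CubeFam G u v D W x) (hWD : W ⊆ D)
    (hDadj : ∀ w ∈ D, G.Adj v w) {S : Finset V} (hS : S ⊆ W) :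
    G.dist (x S) v = S.card := by
  have := fam_pairdist hG hf hWD hDadj hS (Finset.empty_subset W)
  rw [hf.base] at this
  simpa using this
lemma cube_family (hG : IsMedianGraph G) {u v : V} {D : Finset V}
    (hD : ∀ w ∈ D, G.Adj v w ∧ G.dist u w + 1 = G.dist u v) :
    ∀ W : Finset V, W ⊆ D → ∃ x : Finset V → V, CubeFam G u v D W x := by
  have hDadj : ∀ w ∈ D, G.Adj v w := fun w hw => (hD w hw).1
  intro W
  induction W using Finset.induction_on with
  | empty =>
    intro _
    refine ⟨fun _ => v, rfl, ?_, ?_, ?_⟩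
    · intro S hS
      rw [Finset.subset_empty.mp hS]
      simp
    · intro S e _ he
      exact absurd he (Finset.notMem_empty e)
    · intro S w hS hw
      rw [Finset.subset_empty.mp hS]
      constructor
      · intro h; exact absurd h (Finset.notMem_empty w)
      · intro _
        have h1 : G.dist v w = 1 := adj_dist (hDadj w hw)
        simp [h1, G.dist_self]
  | @insert w₀ W' hw₀ IH =>
    intro hWD
    have hW'D : W' ⊆ D := Finset.Subset.trans (Finset.subset_insert _ _) hWD
    have hw₀D : w₀ ∈ D := hWD (Finset.mem_insert_self _ _)
    obtain ⟨x, hf⟩ := IH hW'D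
    have hvw₀ : G.Adj v w₀ := hDadj w₀ hw₀D
    have huw₀ : G.dist u w₀ + 1 = G.dist u v := (hD w₀ hw₀D).2
    -- basic facts about the medians m_S = med u (x S) w₀
    have hmed : ∀ S : Finset V, S ⊆ W' →
        G.dist (x S) (med hG u (x S) w₀) = 1 ∧
        G.dist (med hG u (x S) w₀) w₀ = S.card ∧
        G.dist u (med hG u (x S) w₀) + (S.card + 1) = G.dist u v ∧
        G.dist (med hG u (x S) w₀) v = S.card + 1 := by
      intro S hS
      have hw₀S : w₀ ∉ S := fun h => hw₀ (hS h)
      have f1 : G.dist u (x S) + S.card = G.dist u v := hf.depth S hS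
      have f2 : G.dist (x S) v = S.card := fam_level hG hf hW'D hDadj hS
      have f3 : G.dist (x S) w₀ = G.dist (x S) v + 1 :=
        (hf.sign S w₀ hS hw₀D).2 hw₀S
      obtain ⟨s1, s2, s3⟩ := med_spec hG u (x S) w₀
      set m := med hG u (x S) w₀ with hm
      have c1 : G.dist m (x S) = G.dist (x S) m := G.dist_comm ..
      have c2 : G.dist m u = G.dist u m := G.dist_comm ..
      have c3 : G.dist w₀ u = G.dist u w₀ := G.dist_comm ..
      have c0 : G.dist w₀ m = G.dist m w₀ := G.dist_comm ..
      have g1 : G.dist (x S) m = 1 := by omega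
      have g2 : G.dist m w₀ = S.card := by omega
      have g3 : G.dist u m + (S.card + 1) = G.dist u v := by omega
      have t1 : G.dist m v ≤ G.dist m (x S) + G.dist (x S) v := hG.1.dist_triangle
      have t2 : G.dist u v ≤ G.dist u m + G.dist m v := hG.1.dist_triangle
      exact ⟨g1, g2, g3, by omega⟩
    -- sign conditions for the medians
    have hsig : ∀ S : Finset V, S ⊆ W' → ∀ w ∈ D,
        (w ∈ insert w₀ S → G.dist (med hG u (x S) w₀) w + 1 = G.dist (med hG u (x S) w₀) v) ∧
        (w ∉ insert w₀ S → G.dist (med hG u (x S) w₀) w = G.dist (med hG u (x S) w₀) v + 1) := by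
      intro S hS w hwD
      have hw₀S : w₀ ∉ S := fun h => hw₀ (hS h)
      obtain ⟨g1, g2, g3, g4⟩ := hmed S hS
      have f2 : G.dist (x S) v = S.card := fam_level hG hf hW'D hDadj hS
      set m := med hG u (x S) w₀ with hm
      have hin : ∀ w' ∈ insert w₀ S, G.dist m w' + 1 = G.dist m v := by
        intro w' hw'
        rcases Finset.mem_insert.mp hw' with h | h
        · subst h; omega
        · have hsS := (hf.sign S w' hS (hW'D (hS h))).1 h
          have t1 : G.dist m w' ≤ G.dist m (x S) + G.dist (x S) w' := hG.1.dist_triangle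
          have t2 : G.dist m v ≤ G.dist m w' + G.dist w' v := hG.1.dist_triangle
          have c1 : G.dist m (x S) = G.dist (x S) m := G.dist_comm ..
          have hd : G.dist w' v = 1 := adj_dist (hDadj w' (hW'D (hS h))).symm
          omega
      constructor
      · exact fun h => hin w h
      · intro hws
        -- lower bound via flips
        have hsub : insert w₀ S ⊆ flips G v D m w := by
          intro w' hw'
          have hw'D : w' ∈ D := by
            rcases Finset.mem_insert.mp hw' with h | h
            · subst h; exact hw₀D
            · exact hW'D (hS h)
          simp only [flips, Finset.mem_filter]
          refine ⟨hw'D, Or.inl ⟨?_, ?_⟩⟩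
          · have := hin w' hw'; omega
          · have hd : G.dist w v = 1 := adj_dist (hDadj w hwD).symm
            have hne : w ≠ w' := fun h => hws (h ▸ hw')
            have : G.dist w w' ≠ 0 := fun h => hne (dzero hG h)
            omega
        have hcard : (insert w₀ S).card = S.card + 1 := Finset.card_insert_of_notMem hw₀S
        have hlow : S.card + 1 ≤ G.dist m w := by
          have := Finset.card_le_card hsub
          have := pot hG hDadj (G.dist m w) m w rfl
          omega
        have hpar := parity hG u (G.dist m w) m w rfl
        have huw : G.dist u w + 1 = G.dist u v := (hD w hwD).2
        have hup : G.dist m w ≤ G.dist m (x S) + G.dist (x S) w := hG.1.dist_triangle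
        have c1 : G.dist m (x S) = G.dist (x S) m := G.dist_comm ..
        have hxw : G.dist (x S) w = G.dist (x S) v + 1 := (hf.sign S w hS hwD).2
          (fun h => hws (Finset.mem_insert_of_mem h))
        omega
    -- adjacency within the m-layer
    have hmm : ∀ S e, S ⊆ W' → e ∈ W' → e ∉ S →
        G.dist (med hG u (x S) w₀) (med hG u (x (insert e S)) w₀) = 1 := by
      intro S e hS heW heS
      have hins : insert e S ⊆ W' := Finset.insert_subset heW hS
      have hw₀S : w₀ ∉ S := fun h => hw₀ (hS h)
      have hew₀ : e ≠ w₀ := fun h => hw₀ (h ▸ heW)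
      have hw₀ins : w₀ ∉ insert e S := by
        simp only [Finset.mem_insert]
        push_neg
        exact ⟨fun h => hew₀ h.symm, hw₀S⟩
      obtain ⟨g1, g2, g3, g4⟩ := hmed S hS
      obtain ⟨g1', g2', g3', g4'⟩ := hmed (insert e S) hins
      set m := med hG u (x S) w₀ with hm
      set m' := med hG u (x (insert e S)) w₀ with hm'
      set B := x (insert e S) with hB
      have hcard : (insert e S).card = S.card + 1 := Finset.card_insert_of_notMem heS
      have dB : G.dist (x S) B = 1 := hf.step S e hS heW heS
      have fB : G.dist B v = S.card + 1 := by
        have h1 := fam_level hG hf hW'D hDadj hins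
        rw [← hB] at h1; omega
      have dBw₀ : G.dist B w₀ = S.card + 2 := by
        have h1 := (hf.sign (insert e S) w₀ hins hw₀D).2 hw₀ins
        rw [← hB] at h1; omega
      -- dist B m = 2
      have dBm : G.dist B m = 2 := by
        have hup : G.dist B m ≤ G.dist B (x S) + G.dist (x S) m := hG.1.dist_triangle
        have c1 : G.dist B (x S) = G.dist (x S) B := G.dist_comm ..
        have hsub : ({e, w₀} : Finset V) ⊆ flips G v D B m := by
          intro w' hw'
          simp only [flips, Finset.mem_filter]
          rcases Finset.mem_insert.mp hw' with h | h
          · rw [h]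
            refine ⟨hW'D heW, Or.inl ⟨?_, ?_⟩⟩
            · have h2 := (hf.sign (insert e S) e hins (hW'D heW)).1 (Finset.mem_insert_self _ _)
              rw [← hB] at h2
              omega
            · have heins : e ∉ insert w₀ S := by
                simp only [Finset.mem_insert]; push_neg; exact ⟨hew₀, heS⟩
              have h2 := (hsig S hS e (hW'D heW)).2 heins
              rw [← hm] at h2
              omega
          · have h' : w' = w₀ := Finset.mem_singleton.mp h
            rw [h']
            refine ⟨hw₀D, Or.inr ⟨?_, ?_⟩⟩
            · omega
            · omega
        have hcard2 : ({e, w₀} : Finset V).card = 2 := by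
          rw [Finset.card_insert_of_notMem (by simpa using hew₀), Finset.card_singleton]
        have hlow : 2 ≤ G.dist B m := by
          have := Finset.card_le_card hsub
          have := pot hG hDadj (G.dist B m) B m rfl
          omega
        omega
      -- the median t of (u, m, B)
      obtain ⟨s1, s2, s3⟩ := med_spec hG u m B
      set t := med hG u m B with ht
      have c1 : G.dist t m = G.dist m t := G.dist_comm ..
      have c2 : G.dist t u = G.dist u t := G.dist_comm ..
      have c3 : G.dist B u = G.dist u B := G.dist_comm ..
      have c4 : G.dist m B = G.dist B m := G.dist_comm ..
      have hdepthB : G.dist u B + (S.card + 1) = G.dist u v := by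
        have h1 := hf.depth _ hins
        rw [← hB] at h1; omega
      have c5 : G.dist B t = G.dist t B := G.dist_comm ..
      have e1 : G.dist t m = 1 := by omega
      have e2 : G.dist t B = 1 := by omega
      have e3 : G.dist u t + (S.card + 2) = G.dist u v := by omega
      -- dist t w₀ = S.card + 1
      have dtw₀ : G.dist t w₀ = S.card + 1 := by
        have hup : G.dist t w₀ ≤ G.dist t m + G.dist m w₀ := hG.1.dist_triangle
        have hlow : G.dist B w₀ ≤ G.dist B t + G.dist t w₀ := hG.1.dist_triangle
        omega
      -- t = m' by uniqueness of the median of (u, B, w₀)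
      have huB : G.dist u B = G.dist u t + 1 := by omega
      obtain ⟨s1', s2', s3'⟩ := med_spec hG u B w₀
      have hteq : t = m' := by
        apply med_uniq hG (a := u) (b := B) (c := w₀)
        · have : G.dist t B = 1 := e2
          omega
        · have c5 : G.dist B t = G.dist t B := G.dist_comm ..
          omega
        · have c6 : G.dist w₀ t = G.dist t w₀ := G.dist_comm ..
          have c7 : G.dist w₀ u = G.dist u w₀ := G.dist_comm ..
          omega
        · exact s1'
        · exact s2'
        · exact s3'
      rw [← hteq]
      omega
    -- now define the extended family
    refine ⟨fun S => if w₀ ∈ S then med hG u (x (S.erase w₀)) w₀ else x S, ?_, ?_, ?_, ?_⟩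
    · simp only [Finset.notMem_empty, if_false]
      exact hf.base
    · -- depth
      intro S hS
      by_cases h : w₀ ∈ S
      · simp only [h, if_true]
        have hS' : S.erase w₀ ⊆ W' := by
          intro a ha
          have h1 := Finset.mem_of_mem_erase ha
          have h2 := Finset.ne_of_mem_erase ha
          rcases Finset.mem_insert.mp (hS h1) with h3 | h3
          · exact absurd h3 h2
          · exact h3
        have hcard : S.card = (S.erase w₀).card + 1 := by
          rw [Finset.card_erase_of_mem h]
          have : 0 < S.card := Finset.card_pos.mpr ⟨w₀, h⟩
          omega
        have := (hmed _ hS').2.2.1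
        omega
      · simp only [h, if_false]
        exact hf.depth S (fun a ha => by
          rcases Finset.mem_insert.mp (hS ha) with h3 | h3
          · exact absurd (h3 ▸ ha) h
          · exact h3)
    · -- step
      intro S e hS heW heS
      by_cases h : w₀ ∈ S
      · have hew₀ : e ≠ w₀ := fun he => heS (he ▸ h)
        have hS' : S.erase w₀ ⊆ W' := by
          intro a ha
          have h1 := Finset.mem_of_mem_erase ha
          have h2 := Finset.ne_of_mem_erase ha
          rcases Finset.mem_insert.mp (hS h1) with h3 | h3
          · exact absurd h3 h2
          · exact h3
        have heW' : e ∈ W' := by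
          rcases Finset.mem_insert.mp heW with h3 | h3
          · exact absurd h3 hew₀
          · exact h3
        have heS' : e ∉ S.erase w₀ := fun ha => heS (Finset.mem_of_mem_erase ha)
        have hkey := hmm (S.erase w₀) e hS' heW' heS'
        have hrw : (insert e S).erase w₀ = insert e (S.erase w₀) := by
          ext a
          simp only [Finset.mem_erase, Finset.mem_insert]
          constructor
          · rintro ⟨ha, hb | hb⟩
            · exact Or.inl hb
            · exact Or.inr ⟨ha, hb⟩
          · rintro (ha | ⟨ha, hb⟩)
            · exact ⟨ha ▸ hew₀, Or.inl ha⟩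
            · exact ⟨ha, Or.inr hb⟩
        have hw₀ins : w₀ ∈ insert e S := Finset.mem_insert_of_mem h
        simp only [h, if_true, hw₀ins, if_true, hrw]
        exact hkey
      · by_cases he : e = w₀
        · have hSW' : S ⊆ W' := fun a ha => by
            rcases Finset.mem_insert.mp (hS ha) with h3 | h3
            · exact absurd (h3 ▸ ha) h
            · exact h3
          have hrw : (insert e S).erase w₀ = S := by
            rw [he]; exact Finset.erase_insert h
          have hw₀ins : w₀ ∈ insert e S := by
            rw [he]; exact Finset.mem_insert_self _ _
          simp only [h, if_false, hw₀ins, if_true, hrw]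
          exact (hmed S hSW').1
        · have hSW' : S ⊆ W' := fun a ha => by
            rcases Finset.mem_insert.mp (hS ha) with h3 | h3
            · exact absurd (h3 ▸ ha) h
            · exact h3
          have heW' : e ∈ W' := by
            rcases Finset.mem_insert.mp heW with h3 | h3
            · exact absurd h3 he
            · exact h3
          have hw₀ins : w₀ ∉ insert e S := by
            simp only [Finset.mem_insert]
            push_neg
            exact ⟨fun hh => he hh.symm, h⟩
          simp only [h, if_false, hw₀ins, if_false]
          exact hf.step S e hSW' heW' heS
    · -- sign
      intro S w hS hwD
      by_cases h : w₀ ∈ S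
      · have hS' : S.erase w₀ ⊆ W' := by
          intro a ha
          have h1 := Finset.mem_of_mem_erase ha
          have h2 := Finset.ne_of_mem_erase ha
          rcases Finset.mem_insert.mp (hS h1) with h3 | h3
          · exact absurd h3 h2
          · exact h3
        have hrw : insert w₀ (S.erase w₀) = S := Finset.insert_erase h
        have := hsig (S.erase w₀) hS' w hwD
        rw [hrw] at this
        simp only [h, if_true]
        exact this
      · have hSW' : S ⊆ W' := fun a ha => by
          rcases Finset.mem_insert.mp (hS ha) with h3 | h3
          · exact absurd (h3 ▸ ha) h
          · exact h3
        simp only [h, if_false]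
        exact hf.sign S w hSW' hwD
lemma cube_adj_iff {k : ℕ} (g g' : Fin k → Bool) :
    (cubeGraph k).Adj g g' ↔ (Finset.univ.filter fun i => g i ≠ g' i).card = 1 := by
  rw [cubeGraph, SimpleGraph.fromRel_adj]
  constructor
  · rintro ⟨hne, ⟨i, hi, hall⟩ | ⟨i, hi, hall⟩⟩
    · have : (Finset.univ.filter fun j => g j ≠ g' j) = {i} := by
        ext j
        simp only [Finset.mem_filter, Finset.mem_univ, true_and, Finset.mem_singleton]
        constructor
        · intro hj
          by_contra hji
          exact hj (hall j hji)
        · intro hj; subst hj; exact hi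
      rw [this, Finset.card_singleton]
    · have : (Finset.univ.filter fun j => g j ≠ g' j) = {i} := by
        ext j
        simp only [Finset.mem_filter, Finset.mem_univ, true_and, Finset.mem_singleton]
        constructor
        · intro hj
          by_contra hji
          exact hj ((hall j hji).symm)
        · intro hj; subst hj; exact fun h => hi h.symm
      rw [this, Finset.card_singleton]
  · intro hc
    obtain ⟨i, hi⟩ := Finset.card_eq_one.mp hc
    have hiin : g i ≠ g' i := by
      have : i ∈ (Finset.univ.filter fun j => g j ≠ g' j) := by
        rw [hi]; exact Finset.mem_singleton_self i
      simpa using this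
    refine ⟨fun h => hiin (congrFun h i), Or.inl ⟨i, hiin, fun j hj => ?_⟩⟩
    by_contra hne
    have : j ∈ (Finset.univ.filter fun l => g l ≠ g' l) := by simpa using hne
    rw [hi] at this
    exact hj (Finset.mem_singleton.mp this)

lemma cube_embeds [Fintype V] (hG : IsMedianGraph G) {u v : V} {D : Finset V}
    (hD : ∀ w ∈ D, G.Adj v w ∧ G.dist u w + 1 = G.dist u v) :
    Nonempty (cubeGraph D.card ↪g G) := by
  have hDadj : ∀ w ∈ D, G.Adj v w := fun w hw => (hD w hw).1
  obtain ⟨x, hf⟩ := cube_family hG hD D (Finset.Subset.refl D)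
  let em : {w // w ∈ D} ≃ Fin D.card := Fintype.equivFinOfCardEq (Fintype.card_coe D)
  let ι : Fin D.card → V := fun i => (em.symm i : V)
  have hι_inj : Function.Injective ι := fun i j h =>
    em.symm.injective (Subtype.ext h)
  have hιD : ∀ i, ι i ∈ D := fun i => (em.symm i).2
  let Sg : (Fin D.card → Bool) → Finset V :=
    fun g => (Finset.univ.filter (fun i => g i = true)).image ι
  have hSgD : ∀ g, Sg g ⊆ D := by
    intro g w hw
    simp only [Sg, Finset.mem_image] at hw
    obtain ⟨i, _, hi⟩ := hw
    exact hi ▸ hιD i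
  have hcard : ∀ g g', (Sg g \ Sg g').card + (Sg g' \ Sg g).card
      = (Finset.univ.filter fun i => g i ≠ g' i).card := by
    intro g g'
    have h1 : Sg g \ Sg g' = ((Finset.univ.filter (fun i => g i = true)) \
        (Finset.univ.filter (fun i => g' i = true))).image ι := by
      rw [Finset.image_sdiff _ _ hι_inj]
    have h2 : Sg g' \ Sg g = ((Finset.univ.filter (fun i => g' i = true)) \
        (Finset.univ.filter (fun i => g i = true))).image ι := by
      rw [Finset.image_sdiff _ _ hι_inj]
    rw [h1, h2, Finset.card_image_of_injective _ hι_inj,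
      Finset.card_image_of_injective _ hι_inj]
    have h3 : (Finset.univ.filter (fun i => g i = true)) \
        (Finset.univ.filter (fun i => g' i = true)) =
        Finset.univ.filter (fun i => g i = true ∧ ¬ g' i = true) := by
      ext i; simp [Finset.mem_sdiff]
    have h4 : (Finset.univ.filter (fun i => g' i = true)) \
        (Finset.univ.filter (fun i => g i = true)) =
        Finset.univ.filter (fun i => ¬ g i = true ∧ g' i = true) := by
      ext i; simp [Finset.mem_sdiff]; tauto
    rw [h3, h4, ← Finset.card_union_of_disjoint]
    · congr 1
      ext i
      simp only [Finset.mem_union, Finset.mem_filter, Finset.mem_univ, true_and]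
      cases hgi : g i <;> cases hgi' : g' i <;> simp
    · rw [Finset.disjoint_filter]
      intro i _ hi
      tauto
  have hdist : ∀ g g', G.dist (x (Sg g)) (x (Sg g'))
      = (Finset.univ.filter fun i => g i ≠ g' i).card := by
    intro g g'
    rw [fam_pairdist hG hf (Finset.Subset.refl D) hDadj (hSgD g) (hSgD g')]
    exact hcard g g'
  refine ⟨⟨⟨fun g => x (Sg g), ?_⟩, ?_⟩⟩
  · intro g g' h
    simp only at h
    have h0 : G.dist (x (Sg g)) (x (Sg g')) = 0 := by rw [h, G.dist_self]
    rw [hdist] at h0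
    have := Finset.card_eq_zero.mp h0
    funext i
    by_contra hne
    have : i ∈ (Finset.univ.filter fun i => g i ≠ g' i) := by simpa using hne
    rw [Finset.card_eq_zero.mp h0] at this
    exact absurd this (Finset.notMem_empty i)
  · intro g g'
    show G.Adj (x (Sg g)) (x (Sg g')) ↔ (cubeGraph _).Adj g g'
    rw [cube_adj_iff, ← SimpleGraph.dist_eq_one_iff_adj, hdist]
end MedianProof

open MedianProof Finset in
/-- A median graph of dimension `d` (largest induced hypercube has dimension `d`)
with `n` vertices has at most `d·n` edges. -/
theorem edges_le_dim_mul_card {V : Type*} [Fintype V] [DecidableEq V]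
    (G : SimpleGraph V) [DecidableRel G.Adj] (hG : IsMedianGraph G) (d : ℕ)
    (hcube : Nonempty (cubeGraph d ↪g G))
    (hmax : ∀ k : ℕ, Nonempty (cubeGraph k ↪g G) → k ≤ d) :
    G.edgeFinset.card ≤ d * Fintype.card V := by
  rcases isEmpty_or_nonempty V with hV | hV
  · have : G.edgeFinset = ∅ := Finset.eq_empty_of_forall_notMem (fun e _ => by
      induction e using Sym2.ind with
      | _ a b => exact (IsEmpty.false a).elim)
    rw [this]
    simp
  · obtain ⟨u⟩ := hV
    set T : Finset (V × V) :=
      univ.filter (fun p => G.Adj p.1 p.2 ∧ G.dist u p.2 + 1 = G.dist u p.1) with hT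
    -- each edge is oriented by distance from u
    have step1 : G.edgeFinset.card ≤ T.card := by
      apply Finset.card_le_card_of_surjOn (fun p : V × V => Sym2.mk p.1 p.2)
      intro e he
      induction e using Sym2.ind with
      | _ a b =>
        have hab : G.Adj a b := by
          rw [Finset.mem_coe, SimpleGraph.mem_edgeFinset] at he
          exact he
        rcases horiz hG hab u with h | h
        · refine ⟨(b, a), ?_, ?_⟩
          · simp only [hT, Finset.coe_filter, Set.mem_setOf_eq, Finset.mem_univ, true_and]
            exact ⟨hab.symm, h⟩
          · exact Sym2.eq_swap
        · refine ⟨(a, b), ?_, ?_⟩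
          · simp only [hT, Finset.coe_filter, Set.mem_setOf_eq, Finset.mem_univ, true_and]
            exact ⟨hab, h⟩
          · rfl
    have step2 : T.card = ∑ v ∈ univ,
        (univ.filter (fun w => G.Adj v w ∧ G.dist u w + 1 = G.dist u v)).card := by
      rw [Finset.card_eq_sum_card_fiberwise (f := Prod.fst) (t := univ)
        (fun p _ => Finset.mem_univ _)]
      apply Finset.sum_congr rfl
      intro v _
      apply Finset.card_bij (fun p _ => p.2)
      · intro p hp
        simp only [hT, Finset.mem_filter, Finset.mem_univ, true_and] at hp
        obtain ⟨⟨h1, h2⟩, h3⟩ := hp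
        simp only [Finset.mem_filter, Finset.mem_univ, true_and]
        rw [← h3]
        exact ⟨h1, h2⟩
      · intro p hp q hq hpq
        simp only [hT, Finset.mem_filter] at hp hq
        have : p.1 = q.1 := hp.2.trans hq.2.symm
        exact Prod.ext this hpq
      · intro w hw
        simp only [Finset.mem_filter, Finset.mem_univ, true_and] at hw
        refine ⟨(v, w), ?_, rfl⟩
        simp only [hT, Finset.mem_filter, Finset.mem_univ, true_and]
        exact ⟨hw, trivial⟩
    have step3 : ∀ v : V,
        (univ.filter (fun w => G.Adj v w ∧ G.dist u w + 1 = G.dist u v)).card ≤ d := by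
      intro v
      apply hmax
      apply cube_embeds hG (u := u) (v := v)
      intro w hw
      simpa using hw
    calc G.edgeFinset.card ≤ T.card := step1
      _ = ∑ v ∈ univ, (univ.filter
          (fun w => G.Adj v w ∧ G.dist u w + 1 = G.dist u v)).card := step2
      _ ≤ ∑ _v ∈ (univ : Finset V), d := Finset.sum_le_sum (fun v _ => step3 v)
      _ = Fintype.card V * d := by rw [Finset.sum_const, Finset.card_univ, smul_eq_mul]
      _ = d * Fintype.card V := Nat.mul_comm _ _
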